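/- For any family F of subsets of [n] with |F| > Σ(n,k-1), F contains a k-chain A_1 ⊊ A_2 ⊊ ... ⊊ A_k; equivalently, the maximum size of a family of subsets of [n] with no k-chain is exactly Σ(n,k-1), attained by B(n,k-1). -/

import Mathlib

/-! Auxiliary lemmas on unimodality of binomial coefficients -/

lemma choose_step {n i : ℕ} (h : 2 * (i + 1) ≤ n + 1) :
    n.choose i ≤ n.choose (i + 1) := by
  rcases lt_or_eq_of_le h with h' | h'
  · exact Nat.choose_le_succ_of_lt_half_left (by omega)
  · have hn : n = 2 * i + 1 := by omega
    have : n.choose (n - (i+1)) = n.choose (i+1) := Nat.choose_symm (by omega)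
    rw [hn] at this ⊢
    simp only [show 2*i+1 - (i+1) = i by omega] at this
    omega

lemma choose_mono_left {n i j : ℕ} (hij : i ≤ j) (hj : 2 * j ≤ n + 1) :
    n.choose i ≤ n.choose j := by
  induction j with
  | zero => simp_all
  | succ j ih =>
    rcases Nat.lt_or_ge i (j+1) with h | h
    · exact le_trans (ih (by omega) (by omega)) (choose_step hj)
    · have : i = j + 1 := by omega
      simp [this]

section
variable {n m : ℕ} (hm : 1 ≤ m) (hmn : m ≤ n)
include hm hmn

lemma middle_is_min {j : ℕ} (hlj : (n - m + 1) / 2 ≤ j) (hjr : j ≤ (n - m + 1) / 2 + m - 1) :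
    n.choose ((n - m + 1) / 2) ≤ n.choose j := by
  set l := (n - m + 1) / 2 with hl
  have h2 : 2 * l ≤ n - m + 1 ∧ n - m + 1 ≤ 2 * l + 1 := by
    constructor <;> omega
  rcases Nat.lt_or_ge (2 * j) (n + 2) with h | h
  · exact choose_mono_left hlj (by omega)
  · have hjn : j ≤ n := by omega
    rw [← Nat.choose_symm hjn]
    exact choose_mono_left (by omega) (by omega)

lemma outside_le_middle {j : ℕ} (hj : j < (n - m + 1) / 2 ∨ (n - m + 1) / 2 + m - 1 < j) :
    n.choose j ≤ n.choose ((n - m + 1) / 2) := by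
  set l := (n - m + 1) / 2 with hl
  have h2 : 2 * l ≤ n - m + 1 ∧ n - m + 1 ≤ 2 * l + 1 := by
    constructor <;> omega
  rcases hj with h | h
  · exact choose_mono_left (by omega) (by omega)
  · rcases Nat.lt_or_ge n j with h' | h'
    · simp [Nat.choose_eq_zero_of_lt h']
    · rw [← Nat.choose_symm h']
      exact choose_mono_left (by omega) (by omega)

end

def middleSum (n m : ℕ) : ℕ := ∑ i ∈ Finset.range m, n.choose ((n - m + 1) / 2 + i)

def middleFamily (n m : ℕ) : Finset (Finset (Fin n)) :=
  (Finset.univ : Finset (Finset (Fin n))).filter fun A =>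
    A.card ∈ Finset.Icc ((n - m + 1) / 2) ((n - m + 1) / 2 + m - 1)

lemma middleSum_eq (n m : ℕ) (hm : 1 ≤ m) :
    middleSum n m
      = ∑ j ∈ Finset.Icc ((n - m + 1) / 2) ((n - m + 1) / 2 + m - 1), n.choose j := by
  set l := (n - m + 1) / 2 with hl
  have himg : Finset.Icc l (l + m - 1) = (Finset.range m).image (fun i => l + i) := by
    ext x
    simp only [Finset.mem_Icc, Finset.mem_image, Finset.mem_range]
    constructor
    · rintro ⟨h1, h2⟩; exact ⟨x - l, by omega, by omega⟩
    · rintro ⟨i, hi, rfl⟩; omega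
  rw [himg, Finset.sum_image (by intro a _ b _ h; exact Nat.add_left_cancel h)]
  rfl

lemma card_middleFamily (n m : ℕ) (hm : 1 ≤ m) :
    (middleFamily n m).card = middleSum n m := by
  classical
  set l := (n - m + 1) / 2 with hl
  have h1 : (middleFamily n m).card
      = ∑ c ∈ Finset.Icc l (l + m - 1),
        ((Finset.univ : Finset (Finset (Fin n))).filter fun A => A.card = c).card := by
    rw [show (middleFamily n m).card = ((Finset.univ : Finset (Finset (Fin n))).filter
        fun A => A.card ∈ Finset.Icc l (l + m - 1)).card from rfl]
    rw [Finset.card_eq_sum_card_fiberwise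
      (s := (Finset.univ : Finset (Finset (Fin n))).filter
        fun A => A.card ∈ Finset.Icc l (l + m - 1))
      (f := Finset.card) (t := Finset.Icc l (l + m - 1))
      (fun A hA => (Finset.mem_filter.1 hA).2)]
    refine Finset.sum_congr rfl fun c hc => ?_
    congr 1
    rw [Finset.filter_filter]
    refine Finset.filter_congr fun A _ => ?_
    constructor
    · rintro ⟨_, h⟩; exact h
    · rintro rfl; exact ⟨hc, rfl⟩
  have h2 : ∀ c, ((Finset.univ : Finset (Finset (Fin n))).filter
      fun A => A.card = c).card = n.choose c := by
    intro c
    have : ((Finset.univ : Finset (Finset (Fin n))).filter fun A => A.card = c)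
        = (Finset.univ : Finset (Fin n)).powersetCard c := by
      rw [Finset.powersetCard_eq_filter, Finset.powerset_univ]
    rw [this, Finset.card_powersetCard, Finset.card_univ, Fintype.card_fin]
  rw [h1]
  simp only [h2]
  exact (middleSum_eq n m hm).symm

lemma no_chain_middleFamily (n k : ℕ) (hk : 2 ≤ k) :
    ¬ ∃ A : Fin k → Finset (Fin n),
        (∀ i, A i ∈ middleFamily n (k - 1)) ∧ ∀ i j : Fin k, i < j → A i ⊂ A j := by
  rintro ⟨A, hmem, hchain⟩
  set l := (n - (k-1) + 1) / 2 with hl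
  have hcard : ∀ i, (A i).card ∈ Finset.Icc l (l + (k-1) - 1) := fun i =>
    (Finset.mem_filter.1 (hmem i)).2
  have hinj : Set.InjOn (fun i => (A i).card) ↑(Finset.univ : Finset (Fin k)) := by
    intro i _ j _ hij
    by_contra hne
    rcases lt_or_gt_of_ne hne with h | h
    · exact absurd (Finset.card_lt_card (hchain i j h)) (by simp [hij])
    · exact absurd (Finset.card_lt_card (hchain j i h)) (by simp [hij])
  have := Finset.card_le_card_of_injOn (fun i => (A i).card)
    (fun i _ => Finset.mem_Icc.2 (Finset.mem_Icc.1 (hcard i))) hinj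
  rw [Finset.card_univ, Fintype.card_fin, Nat.card_Icc] at this
  omega

/-! Chain height (Mirsky decomposition) -/

def chainHeight {n : ℕ} (F : Finset (Finset (Fin n))) (A : Finset (Fin n)) : ℕ :=
  (F.filter (· ⊂ A)).attach.sup fun B => chainHeight F B.1 + 1
termination_by A.card
decreasing_by
  exact Finset.card_lt_card (Finset.mem_filter.1 B.2).2

lemma chainHeight_lt {n : ℕ} {F : Finset (Finset (Fin n))} {A B : Finset (Fin n)}
    (hB : B ∈ F) (hBA : B ⊂ A) : chainHeight F B < chainHeight F A := by
  conv_rhs => rw [chainHeight]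
  have hmem : B ∈ F.filter (· ⊂ A) := Finset.mem_filter.2 ⟨hB, hBA⟩
  have := Finset.le_sup (f := fun B : {x // x ∈ F.filter (· ⊂ A)} => chainHeight F B.1 + 1)
    (Finset.mem_attach _ ⟨B, hmem⟩)
  dsimp only at this
  omega

lemma exists_chain {n : ℕ} {F : Finset (Finset (Fin n))} :
    ∀ h : ℕ, ∀ A ∈ F, chainHeight F A = h →
    ∃ g : ℕ → Finset (Fin n), (∀ t ≤ h, g t ∈ F) ∧
      (∀ i j, i < j → j ≤ h → g i ⊂ g j) ∧ g h = A := by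
  intro h
  induction h with
  | zero =>
    intro A hA _
    exact ⟨fun _ => A, fun t ht => by simpa [Nat.le_zero.1 ht], fun i j hij hj => by omega,
      rfl⟩
  | succ h ih =>
    intro A hA hh
    have hne : (F.filter (· ⊂ A)).Nonempty := by
      by_contra hemp
      rw [Finset.not_nonempty_iff_eq_empty] at hemp
      rw [chainHeight, hemp] at hh
      simp at hh
    have hne' : (F.filter (· ⊂ A)).attach.Nonempty := Finset.attach_nonempty_iff.2 hne
    obtain ⟨B, _, hBsup⟩ := Finset.exists_mem_eq_sup (F.filter (· ⊂ A)).attach hne'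
      (fun B => chainHeight F B.1 + 1)
    rw [chainHeight] at hh
    rw [hh] at hBsup
    obtain ⟨hBF, hBA⟩ := Finset.mem_filter.1 B.2
    have hBh : chainHeight F B.1 = h := by omega
    obtain ⟨g', hg'F, hg'chain, hg'top⟩ := ih B.1 hBF hBh
    refine ⟨fun t => if t ≤ h then g' t else A, fun t ht => ?_, fun i j hij hj => ?_, ?_⟩
    · by_cases h' : t ≤ h
      · simpa [h'] using hg'F t h'
      · simpa [h'] using hA
    · by_cases hjh : j ≤ h
      · have : i ≤ h := by omega
        simp only [if_pos hjh, if_pos this]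
        exact hg'chain i j hij hjh
      · have hih : i ≤ h := by omega
        simp only [if_pos hih, if_neg hjh]
        rcases Nat.lt_or_ge i h with h' | h'
        · exact (hg'chain i h h' le_rfl).trans (hg'top ▸ hBA)
        · have : i = h := by omega
          rw [this, hg'top]
          exact hBA
    · simp

open Finset in
lemma antichain_weight {n : ℕ} {𝒜 : Finset (Finset (Fin n))}
    (h𝒜 : IsAntichain (· ⊆ ·) (𝒜 : Set (Finset (Fin n)))) :
    ∑ A ∈ 𝒜, (A.card.factorial * (n - A.card).factorial) ≤ n.factorial := by
  classical
  have hlym := Finset.sum_card_slice_div_choose_le_one (𝕜 := ℚ) h𝒜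
  rw [Fintype.card_fin] at hlym
  have hcast : ((∑ A ∈ 𝒜, (A.card.factorial * (n - A.card).factorial) : ℕ) : ℚ)
      ≤ (n.factorial : ℚ) := by
    push_cast
    have hfib : ∑ A ∈ 𝒜, ((A.card.factorial : ℚ) * (n - A.card).factorial)
        = ∑ r ∈ range (n + 1), ∑ A ∈ 𝒜.filter (fun A => A.card = r),
            ((A.card.factorial : ℚ) * (n - A.card).factorial) := by
      rw [Finset.sum_fiberwise_of_maps_to]
      intro A hA
      have hcard : A.card ≤ n := by
        have := Finset.card_le_card (Finset.subset_univ A)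
        simpa using this
      exact Finset.mem_range.2 (Nat.lt_succ_of_le hcard)
    rw [hfib]
    have heq : ∀ r ∈ range (n + 1),
        ∑ A ∈ 𝒜.filter (fun A => A.card = r),
            ((A.card.factorial : ℚ) * (n - A.card).factorial)
        = ((𝒜 # r).card : ℚ) / (n.choose r) * n.factorial := by
      intro r hr
      have hrn : r ≤ n := Nat.lt_succ_iff.1 (Finset.mem_range.1 hr)
      have hpos : (0 : ℚ) < (n.choose r : ℚ) := by
        exact_mod_cast Nat.choose_pos hrn
      have hfact : (n.choose r : ℚ) * (r.factorial * (n - r).factorial) = n.factorial := by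
        have h0 : n.choose r * (r.factorial * (n - r).factorial) = n.factorial := by
          rw [← Nat.choose_mul_factorial_mul_factorial hrn]; ring
        exact_mod_cast h0
      have hconst : ∑ A ∈ 𝒜.filter (fun A => A.card = r),
          ((A.card.factorial : ℚ) * (n - A.card).factorial)
          = ((𝒜 # r).card : ℚ) * (r.factorial * (n - r).factorial) := by
        rw [Finset.sum_congr rfl (fun A hA => ?_), Finset.sum_const, nsmul_eq_mul]
        · rfl
        · rw [(Finset.mem_filter.1 hA).2]
      rw [hconst, div_mul_eq_mul_div, eq_div_iff (ne_of_gt hpos)]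
      linear_combination ((𝒜 # r).card : ℚ) * hfact
    rw [Finset.sum_congr rfl heq, ← Finset.sum_mul]
    calc (∑ r ∈ range (n + 1), ((𝒜 # r).card : ℚ) / (n.choose r)) * n.factorial
        ≤ 1 * n.factorial := by
          apply mul_le_mul_of_nonneg_right hlym
          positivity
      _ = n.factorial := one_mul _
  exact_mod_cast hcast

open Finset in
lemma weight_bound {n k : ℕ} (hk : 2 ≤ k) {F : Finset (Finset (Fin n))}
    (hno : ¬ ∃ A : Fin k → Finset (Fin n),
        (∀ i, A i ∈ F) ∧ ∀ i j : Fin k, i < j → A i ⊂ A j) :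
    ∑ A ∈ F, (A.card.factorial * (n - A.card).factorial) ≤ (k - 1) * n.factorial := by
  classical
  have hht : ∀ A ∈ F, chainHeight F A < k - 1 := by
    intro A hA
    by_contra hge
    push_neg at hge
    obtain ⟨g, hgF, hgchain, -⟩ := exists_chain (chainHeight F A) A hA rfl
    exact hno ⟨fun i => g i.val, fun i => hgF i.val (by omega),
      fun i j hij => hgchain i.val j.val hij (by omega)⟩
  have hfib : ∑ A ∈ F, (A.card.factorial * (n - A.card).factorial)
      = ∑ t ∈ range (k - 1), ∑ A ∈ F.filter (fun A => chainHeight F A = t),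
          (A.card.factorial * (n - A.card).factorial) := by
    rw [Finset.sum_fiberwise_of_maps_to]
    intro A hA
    exact Finset.mem_range.2 (hht A hA)
  rw [hfib]
  calc ∑ t ∈ range (k - 1), ∑ A ∈ F.filter (fun A => chainHeight F A = t),
          (A.card.factorial * (n - A.card).factorial)
      ≤ ∑ _t ∈ range (k - 1), n.factorial := by
        apply Finset.sum_le_sum
        intro t _
        apply antichain_weight
        intro A hA B hB hne hsub
        rw [Finset.coe_filter] at hA hB
        obtain ⟨hAF, hAt⟩ := hA
        obtain ⟨hBF, hBt⟩ := hB
        have : A ⊂ B := ⟨hsub, fun h => hne (Finset.Subset.antisymm hsub h)⟩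
        have := chainHeight_lt hAF this
        omega
    _ = (k - 1) * n.factorial := by
        rw [Finset.sum_const, Finset.card_range, smul_eq_mul]

lemma term_ineq {f C c w Nf : ℕ} (hf : f ≤ C) (hc : c ≤ C) (hN : C * w = Nf) :
    f * Nf + c * Nf ≤ C * Nf + c * (f * w) := by
  subst hN
  obtain ⟨d, rfl⟩ : ∃ d, C = f + d := ⟨C - f, by omega⟩
  have h1 : c * d ≤ (f + d) * d := Nat.mul_le_mul_right d hc
  nlinarith [Nat.mul_le_mul_right w h1]

open Finset in
lemma main_bound {n k : ℕ} (hk : 2 ≤ k) (hmn : k - 1 ≤ n) {F : Finset (Finset (Fin n))}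
    (hno : ¬ ∃ A : Fin k → Finset (Fin n),
        (∀ i, A i ∈ F) ∧ ∀ i j : Fin k, i < j → A i ⊂ A j) :
    F.card ≤ middleSum n (k - 1) := by
  classical
  set m := k - 1 with hmdef
  have hm1 : 1 ≤ m := by omega
  set l := (n - m + 1) / 2 with hl
  set S := Finset.Icc l (l + m - 1) with hS
  set R := Finset.range (n + 1) with hR
  have hdiv : 2 * l ≤ n - m + 1 ∧ n - m + 1 ≤ 2 * l + 1 := ⟨by omega, by omega⟩
  have hSR : S ⊆ R := by
    intro j hj
    rw [hS, Finset.mem_Icc] at hj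
    rw [hR, Finset.mem_range]
    omega
  have hcardS : S.card = m := by
    rw [hS, Nat.card_Icc]; omega
  set f : ℕ → ℕ := fun j => (F.filter (fun A => A.card = j)).card with hfdef
  set w : ℕ → ℕ := fun j => j.factorial * (n - j).factorial with hwdef
  have hcardle : ∀ A : Finset (Fin n), A.card ≤ n := fun A => by
    have := Finset.card_le_card (Finset.subset_univ A); simpa using this
  have hFsum : F.card = ∑ j ∈ R, f j :=
    Finset.card_eq_sum_card_fiberwise
      (fun A _ => Finset.mem_range.2 (Nat.lt_succ_of_le (hcardle A)))
  have hfw : ∑ j ∈ R, f j * w j ≤ m * n.factorial := by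
    have h1 := weight_bound hk hno
    have h2 : ∑ A ∈ F, (A.card.factorial * (n - A.card).factorial)
        = ∑ j ∈ R, ∑ A ∈ F.filter (fun A => A.card = j),
            (A.card.factorial * (n - A.card).factorial) := by
      rw [Finset.sum_fiberwise_of_maps_to]
      intro A hA; exact Finset.mem_range.2 (Nat.lt_succ_of_le (hcardle A))
    have h3 : ∀ j ∈ R, ∑ A ∈ F.filter (fun A => A.card = j),
        (A.card.factorial * (n - A.card).factorial) = f j * w j := by
      intro j hj
      rw [Finset.sum_congr rfl (fun A hA => by rw [(Finset.mem_filter.1 hA).2]),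
        Finset.sum_const, smul_eq_mul]
    have h4 : ∑ j ∈ R, f j * w j
        = ∑ A ∈ F, (A.card.factorial * (n - A.card).factorial) := by
      rw [h2]; exact (Finset.sum_congr rfl h3).symm
    rw [h4]; exact h1
  have hfC : ∀ j, f j ≤ n.choose j := by
    intro j
    have hsub : F.filter (fun A => A.card = j)
        ⊆ Finset.univ.filter (fun A : Finset (Fin n) => A.card = j) :=
      Finset.filter_subset_filter _ (Finset.subset_univ F)
    have h5 := Finset.card_le_card hsub
    rwa [show (Finset.univ.filter (fun A : Finset (Fin n) => A.card = j))
        = Finset.univ.powersetCard j from by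
          rw [Finset.powersetCard_eq_filter, Finset.powerset_univ],
      Finset.card_powersetCard, Finset.card_univ, Fintype.card_fin] at h5
  have hCw : ∀ j ∈ R, n.choose j * w j = n.factorial := by
    intro j hj
    have hjn : j ≤ n := by rw [hR, Finset.mem_range] at hj; omega
    show n.choose j * (j.factorial * (n - j).factorial) = n.factorial
    rw [← mul_assoc]
    exact Nat.choose_mul_factorial_mul_factorial hjn
  have hcm : ∀ j ∈ S, n.choose l ≤ n.choose j := by
    intro j hj; rw [hS, Finset.mem_Icc] at hj
    exact middle_is_min hm1 hmn hj.1 hj.2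
  have hout : ∀ j ∈ R \ S, n.choose j ≤ n.choose l := by
    intro j hj
    rw [Finset.mem_sdiff, hS, Finset.mem_Icc, not_and_or, not_le, not_le] at hj
    exact outside_le_middle hm1 hmn hj.2
  set cs := n.choose l with hcs
  have key : (∑ j ∈ R, f j) * n.factorial + cs * ∑ j ∈ S, f j * w j
      ≤ (∑ j ∈ S, n.choose j) * n.factorial + cs * ∑ j ∈ S, f j * w j := by
    calc (∑ j ∈ R, f j) * n.factorial + cs * ∑ j ∈ S, f j * w j
        = ((∑ j ∈ S, f j * n.factorial) + (∑ j ∈ R \ S, f j * n.factorial))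
            + cs * ∑ j ∈ S, f j * w j := by
          rw [Finset.sum_mul, ← Finset.sum_sdiff hSR]
          ring
      _ ≤ ((∑ j ∈ S, f j * n.factorial) + (∑ j ∈ R \ S, cs * (f j * w j)))
            + cs * ∑ j ∈ S, f j * w j := by
          apply Nat.add_le_add_right
          apply Nat.add_le_add_left
          apply Finset.sum_le_sum
          intro j hj
          have hjR : j ∈ R := (Finset.mem_sdiff.1 hj).1
          calc f j * n.factorial = f j * (n.choose j * w j) := by rw [hCw j hjR]
            _ ≤ f j * (cs * w j) := by
                have := hout j hj
                gcongr
            _ = cs * (f j * w j) := by ring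
      _ = (∑ j ∈ S, f j * n.factorial)
            + cs * ((∑ j ∈ R \ S, f j * w j) + ∑ j ∈ S, f j * w j) := by
          rw [mul_add, Finset.mul_sum, Finset.mul_sum]
          ring
      _ = (∑ j ∈ S, f j * n.factorial) + cs * (∑ j ∈ R, f j * w j) := by
          rw [Finset.sum_sdiff hSR]
      _ ≤ (∑ j ∈ S, f j * n.factorial) + cs * (m * n.factorial) := by
          apply Nat.add_le_add_left
          exact Nat.mul_le_mul_left cs hfw
      _ = ∑ j ∈ S, (f j * n.factorial + cs * n.factorial) := by
          rw [Finset.sum_add_distrib]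
          congr 1
          rw [Finset.sum_const, hcardS, smul_eq_mul]
          ring
      _ ≤ ∑ j ∈ S, (n.choose j * n.factorial + cs * (f j * w j)) :=
          Finset.sum_le_sum fun j hj => term_ineq (hfC j) (hcm j hj) (hCw j (hSR hj))
      _ = (∑ j ∈ S, n.choose j) * n.factorial + cs * ∑ j ∈ S, f j * w j := by
          rw [Finset.sum_add_distrib, Finset.sum_mul, Finset.mul_sum]
  have hfin : (∑ j ∈ R, f j) * n.factorial ≤ (∑ j ∈ S, n.choose j) * n.factorial :=
    le_of_add_le_add_right key
  have hmain := Nat.le_of_mul_le_mul_right hfin (Nat.factorial_pos n)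
  rw [hFsum, middleSum_eq n m hm1]
  exact hmain

/-- Erdős's theorem with the extremal example: families larger than Σ(n,k-1) contain
a k-chain, and B(n,k-1) has size Σ(n,k-1) with no k-chain. -/
theorem erdos_extremal (n k : ℕ) (hk : 2 ≤ k) :
    (∀ F : Finset (Finset (Fin n)), middleSum n (k - 1) < F.card →
        ∃ A : Fin k → Finset (Fin n),
          (∀ i, A i ∈ F) ∧ ∀ i j : Fin k, i < j → A i ⊂ A j) ∧
    (middleFamily n (k - 1)).card = middleSum n (k - 1) ∧
    ¬ ∃ A : Fin k → Finset (Fin n),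
        (∀ i, A i ∈ middleFamily n (k - 1)) ∧ ∀ i j : Fin k, i < j → A i ⊂ A j := by
  refine ⟨?_, card_middleFamily n (k - 1) (by omega), no_chain_middleFamily n k hk⟩
  intro F hF
  rcases Nat.lt_or_ge n (k - 1) with hn | hn
  · -- vacuous case: middleSum n (k-1) = 2^n ≥ F.card, contradiction
    exfalso
    have hl0 : (n - (k - 1) + 1) / 2 = 0 := by
      have : n - (k - 1) = 0 := by omega
      rw [this]
    have hsum : middleSum n (k - 1) = ∑ i ∈ Finset.range (k - 1), n.choose i := by
      unfold middleSum
      rw [hl0]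
      simp
    have h2n : (2 : ℕ) ^ n ≤ middleSum n (k - 1) := by
      rw [hsum, ← Nat.sum_range_choose n]
      exact Finset.sum_le_sum_of_subset (Finset.range_subset_range.2 (by omega))
    have hcard : F.card ≤ 2 ^ n := by
      have := Finset.card_le_univ F
      rwa [Fintype.card_finset, Fintype.card_fin] at this
    omega
  · by_contra hno
    exact absurd (main_bound hk hn hno) (by omega)
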